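/- Let Φ : [α₁,α₂] → ℝ and Ψ : [β₁,β₂] → ℝ be C¹ functions with strictly increasing derivatives Φ' and Ψ' such that Φ' : [α₁,α₂] → [β₁,β₂] is a bijection with inverse Ψ' : [β₁,β₂] → [α₁,α₂], and Φ(α₁) + Ψ(β₁) = α₁·β₁ with Φ'(α₁) = β₁ (i.e., Φ and Ψ are Legendre transforms of each other). Then for every a ∈ [α₁,α₂] and b ∈ [β₁,β₂] one has 0 ≤ Φ(a) + Ψ(b) − a·b ≤ −(Φ'(a) − b)·(Ψ'(b) − a), and the first inequality is an equality if and only if the second inequality is an equality. -/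

import Mathlib

open Set MeasureTheory intervalIntegral

/-- FTC on a closed interval from `HasDerivWithinAt` data. -/
lemma ftc_Icc {A B : ℝ} {f f' : ℝ → ℝ}
    (hd : ∀ x ∈ Icc A B, HasDerivWithinAt f (f' x) (Icc A B) x)
    (hc : ContinuousOn f' (Icc A B)) {u v : ℝ}
    (hu : u ∈ Icc A B) (hv : v ∈ Icc A B) (huv : u ≤ v) :
    ∫ x in u..v, f' x = f v - f u := by
  have hsub : Icc u v ⊆ Icc A B := Icc_subset_Icc hu.1 hv.2
  have hcontf : ContinuousOn f (Icc A B) := fun x hx => (hd x hx).continuousWithinAt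
  refine integral_eq_sub_of_hasDeriv_right_of_le huv (hcontf.mono hsub) ?_ ?_
  · intro x hx
    have hx' : x ∈ Icc A B := hsub (Ioo_subset_Icc_self hx)
    have hnbd : Icc A B ∈ nhds x := by
      refine Icc_mem_nhds ?_ ?_
      · exact lt_of_le_of_lt hu.1 hx.1
      · exact lt_of_lt_of_le hx.2 hv.2
    exact ((hd x hx').hasDerivAt hnbd).hasDerivWithinAt
  · exact (hc.mono hsub).intervalIntegrable_of_Icc huv

/-- Bound an interval integral of a function between two constants. -/
lemma int_bound {u v m M : ℝ} (huv : u ≤ v) {f : ℝ → ℝ}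
    (hf : ContinuousOn f (Icc u v))
    (hm : ∀ x ∈ Icc u v, m ≤ f x) (hM : ∀ x ∈ Icc u v, f x ≤ M) :
    m * (v - u) ≤ (∫ x in u..v, f x) ∧ (∫ x in u..v, f x) ≤ M * (v - u) := by
  have hfi : IntervalIntegrable f volume u v := hf.intervalIntegrable_of_Icc huv
  have h1 : (∫ _ in u..v, m) ≤ ∫ x in u..v, f x :=
    integral_mono_on huv (intervalIntegrable_const) hfi hm
  have h2 : (∫ x in u..v, f x) ≤ ∫ _ in u..v, M :=
    integral_mono_on huv hfi (intervalIntegrable_const) hM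
  rw [intervalIntegral.integral_const, smul_eq_mul] at h1 h2
  constructor <;> linarith

theorem young_inequality_legendre
    (α₁ α₂ β₁ β₂ : ℝ) (Φ Ψ Φ' Ψ' : ℝ → ℝ)
    (hα : α₁ < α₂) (hβ : β₁ < β₂)
    (hΦderiv : ∀ x ∈ Icc α₁ α₂, HasDerivWithinAt Φ (Φ' x) (Icc α₁ α₂) x)
    (hΨderiv : ∀ y ∈ Icc β₁ β₂, HasDerivWithinAt Ψ (Ψ' y) (Icc β₁ β₂) y)
    (hΦ'cont : ContinuousOn Φ' (Icc α₁ α₂))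
    (hΨ'cont : ContinuousOn Ψ' (Icc β₁ β₂))
    (hΦ'mono : StrictMonoOn Φ' (Icc α₁ α₂))
    (hΨ'mono : StrictMonoOn Ψ' (Icc β₁ β₂))
    (hbij : BijOn Φ' (Icc α₁ α₂) (Icc β₁ β₂))
    (hinvL : ∀ x ∈ Icc α₁ α₂, Ψ' (Φ' x) = x)
    (hinvR : ∀ y ∈ Icc β₁ β₂, Φ' (Ψ' y) = y)
    (hΨ'maps : MapsTo Ψ' (Icc β₁ β₂) (Icc α₁ α₂))
    (hΦ'α₁ : Φ' α₁ = β₁)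
    (hsum : Φ α₁ + Ψ β₁ = α₁ * β₁)
    (a b : ℝ) (ha : a ∈ Icc α₁ α₂) (hb : b ∈ Icc β₁ β₂) :
    (0 ≤ Φ a + Ψ b - a * b ∧
     Φ a + Ψ b - a * b ≤ -(Φ' a - b) * (Ψ' b - a)) ∧
    (Φ a + Ψ b - a * b = 0 ↔ Φ a + Ψ b - a * b = -(Φ' a - b) * (Ψ' b - a)) := by
  have hα₁ : α₁ ∈ Icc α₁ α₂ := left_mem_Icc.mpr hα.le
  have hβ₁ : β₁ ∈ Icc β₁ β₂ := left_mem_Icc.mpr hβ.le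
  have hΨ'β₁ : Ψ' β₁ = α₁ := by rw [← hΦ'α₁]; exact hinvL α₁ hα₁
  have hΦcont : ContinuousOn Φ (Icc α₁ α₂) := fun x hx => (hΦderiv x hx).continuousWithinAt
  have hΨcont : ContinuousOn Ψ (Icc β₁ β₂) := fun y hy => (hΨderiv y hy).continuousWithinAt
  -- the auxiliary function h
  set h : ℝ → ℝ := fun y => Φ (Ψ' y) + Ψ y - y * Ψ' y with hh
  -- h is constant on Icc β₁ β₂
  have hconst : ∀ y ∈ Icc β₁ β₂, h y = h β₁ := by
    apply constant_of_has_deriv_right_zero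
    · have h1 : ContinuousOn (fun y => Φ (Ψ' y)) (Icc β₁ β₂) :=
        hΦcont.comp hΨ'cont hΨ'maps
      have h2 : ContinuousOn (fun y => y * Ψ' y) (Icc β₁ β₂) :=
        continuousOn_id.mul hΨ'cont
      exact (h1.add hΨcont).sub h2
    · intro y hy
      have hyIcc : y ∈ Icc β₁ β₂ := Ico_subset_Icc_self hy
      have hylt : y < β₂ := hy.2
      rw [hasDerivWithinAt_iff_isLittleO]
      rw [Asymptotics.isLittleO_iff]
      intro ε hε
      -- eventually z ∈ Icc y β₂
      have hev1 : ∀ᶠ z in nhdsWithin y (Ici y), z ∈ Icc y β₂ := by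
        rw [← nhdsWithin_Icc_eq_nhdsGE hylt]
        exact eventually_mem_nhdsWithin
      -- eventually Ψ' z - Ψ' y < ε
      have hΨ'tend : Filter.Tendsto Ψ' (nhdsWithin y (Ici y)) (nhds (Ψ' y)) := by
        rw [← nhdsWithin_Icc_eq_nhdsGE hylt]
        exact ((hΨ'cont y hyIcc).mono (Icc_subset_Icc hy.1 le_rfl))
      have hev2 : ∀ᶠ z in nhdsWithin y (Ici y), Ψ' z < Ψ' y + ε :=
        hΨ'tend.eventually (Filter.Tendsto.eventually_lt_const (by linarith) Filter.tendsto_id)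
      filter_upwards [hev1, hev2] with z hz1 hz2
      have hzIcc : z ∈ Icc β₁ β₂ := ⟨hy.1.trans hz1.1, hz1.2⟩
      have hyz : y ≤ z := hz1.1
      -- bounds on Ψ z - Ψ y
      have hΨbnd : Ψ' y * (z - y) ≤ Ψ z - Ψ y ∧ Ψ z - Ψ y ≤ Ψ' z * (z - y) := by
        rw [← ftc_Icc hΨderiv hΨ'cont hyIcc hzIcc hyz]
        refine int_bound hyz (hΨ'cont.mono (Icc_subset_Icc hyIcc.1 hzIcc.2)) ?_ ?_
        · intro t ht
          exact (hΨ'mono.monotoneOn) hyIcc ⟨hyIcc.1.trans ht.1, ht.2.trans hzIcc.2⟩ ht.1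
        · intro t ht
          exact (hΨ'mono.monotoneOn) ⟨hyIcc.1.trans ht.1, ht.2.trans hzIcc.2⟩ hzIcc ht.2
      -- bounds on Φ (Ψ' z) - Φ (Ψ' y)
      have hΨ'yI : Ψ' y ∈ Icc α₁ α₂ := hΨ'maps hyIcc
      have hΨ'zI : Ψ' z ∈ Icc α₁ α₂ := hΨ'maps hzIcc
      have hΨ'yz : Ψ' y ≤ Ψ' z := hΨ'mono.monotoneOn hyIcc hzIcc hyz
      have hΦbnd : y * (Ψ' z - Ψ' y) ≤ Φ (Ψ' z) - Φ (Ψ' y) ∧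
          Φ (Ψ' z) - Φ (Ψ' y) ≤ z * (Ψ' z - Ψ' y) := by
        rw [← ftc_Icc hΦderiv hΦ'cont hΨ'yI hΨ'zI hΨ'yz]
        refine int_bound hΨ'yz (hΦ'cont.mono (Icc_subset_Icc hΨ'yI.1 hΨ'zI.2)) ?_ ?_
        · intro t ht
          have htI : t ∈ Icc α₁ α₂ := ⟨hΨ'yI.1.trans ht.1, ht.2.trans hΨ'zI.2⟩
          have := hΦ'mono.monotoneOn hΨ'yI htI ht.1
          rwa [hinvR y hyIcc] at this
        · intro t ht
          have htI : t ∈ Icc α₁ α₂ := ⟨hΨ'yI.1.trans ht.1, ht.2.trans hΨ'zI.2⟩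
          have := hΦ'mono.monotoneOn htI hΨ'zI ht.2
          rwa [hinvR z hzIcc] at this
      have habs : |h z - h y| ≤ (z - y) * (Ψ' z - Ψ' y) := by
        simp only [hh]
        rw [abs_le]
        constructor <;> nlinarith [hΨbnd.1, hΨbnd.2, hΦbnd.1, hΦbnd.2]
      have : ‖h z - h y - (z - y) • (0:ℝ)‖ ≤ (z - y) * (Ψ' z - Ψ' y) := by
        simpa using habs
      calc ‖h z - h y - (z - y) • (0:ℝ)‖ ≤ (z - y) * (Ψ' z - Ψ' y) := this
        _ ≤ ε * (z - y) := by nlinarith [hz2, sub_nonneg.mpr hyz, sub_nonneg.mpr hΨ'yz]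
        _ ≤ ε * ‖z - y‖ := by
            rw [Real.norm_eq_abs, abs_of_nonneg (sub_nonneg.mpr hyz)]
  -- the key Legendre identity
  have hbIcc := hb
  have hkey : ∀ y ∈ Icc β₁ β₂, Φ (Ψ' y) + Ψ y = Ψ' y * y := by
    intro y hy
    have := hconst y hy
    simp only [hh] at this
    rw [hΨ'β₁] at this
    have h0 : Φ α₁ + Ψ β₁ - β₁ * α₁ = 0 := by linarith [hsum]
    nlinarith [this]
  set c := Ψ' b with hcdef
  have hcI : c ∈ Icc α₁ α₂ := hΨ'maps hb
  have hΦ'c : Φ' c = b := hinvR b hb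
  have hΦcb : Φ c + Ψ b = c * b := hkey b hb
  -- express F as an integral
  set F := Φ a + Ψ b - a * b with hF
  have hmono_le : ∀ {u v : ℝ}, u ∈ Icc α₁ α₂ → v ∈ Icc α₁ α₂ → u ≤ v → Φ' u ≤ Φ' v :=
    fun hu hv huv => hΦ'mono.monotoneOn hu hv huv
  -- case analysis on c ≤ a or a ≤ c
  rcases le_total c a with hca | hac
  · -- c ≤ a
    have hIcc_sub : Icc c a ⊆ Icc α₁ α₂ := Icc_subset_Icc hcI.1 ha.2
    have hint : ∫ x in c..a, (Φ' x - b) = F := by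
      have h1 : ∫ x in c..a, Φ' x = Φ a - Φ c := ftc_Icc hΦderiv hΦ'cont hcI ha hca
      have h2 : ∫ x in c..a, (Φ' x - b) = (∫ x in c..a, Φ' x) - ∫ _ in c..a, b := by
        rw [← integral_sub ((hΦ'cont.mono hIcc_sub).intervalIntegrable_of_Icc hca)
          intervalIntegrable_const]
      rw [h2, h1, intervalIntegral.integral_const, smul_eq_mul, hF]
      nlinarith [hΦcb]
    have hcont' : ContinuousOn (fun x => Φ' x - b) (Icc c a) :=
      (hΦ'cont.mono hIcc_sub).sub continuousOn_const
    have hbnd := int_bound hca hcont'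
      (m := 0) (M := Φ' a - b)
      (fun x hx => by
        have := hmono_le hcI (hIcc_sub hx) hx.1
        rw [hΦ'c] at this; linarith)
      (fun x hx => by
        have := hmono_le (hIcc_sub hx) ha hx.2
        linarith)
    have hFnonneg : 0 ≤ F := by
      rw [← hint]; linarith [hbnd.1]
    have hFle : F ≤ -(Φ' a - b) * (c - a) := by
      rw [← hint]; nlinarith [hbnd.2]
    refine ⟨⟨hFnonneg, hFle⟩, ?_⟩
    constructor
    · intro hF0
      -- F = 0 implies a = c
      have hac' : a = c := by
        by_contra hne
        have hlt : c < a := lt_of_le_of_ne hca (fun h => hne h.symm)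
        have hpos : 0 < ∫ x in c..a, (Φ' x - b) := by
          apply intervalIntegral_pos_of_pos_on
            (hcont'.intervalIntegrable_of_Icc hca)
          · intro x hx
            have hxI : x ∈ Icc α₁ α₂ := hIcc_sub (Ioo_subset_Icc_self hx)
            have := hΦ'mono hcI hxI hx.1
            rw [hΦ'c] at this; linarith
          · exact hlt
        rw [hint, hF0] at hpos; exact lt_irrefl 0 hpos
      subst hac'
      rw [hF0, hΦ'c]
      ring
    · intro hFeq
      -- F = RHS implies a = c
      have hac' : a = c := by
        by_contra hne
        have hlt : c < a := lt_of_le_of_ne hca (fun h => hne h.symm)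
        have hpos : 0 < ∫ x in c..a, (Φ' a - Φ' x) := by
          apply intervalIntegral_pos_of_pos_on
          · exact (continuousOn_const.sub (hΦ'cont.mono hIcc_sub)).intervalIntegrable_of_Icc hca
          · intro x hx
            have hxI : x ∈ Icc α₁ α₂ := hIcc_sub (Ioo_subset_Icc_self hx)
            have := hΦ'mono hxI ha hx.2
            linarith
          · exact hlt
        have hsplit : ∫ x in c..a, (Φ' a - Φ' x) = (∫ _ in c..a, Φ' a) - ∫ x in c..a, Φ' x := by
          rw [← integral_sub intervalIntegrable_const
            ((hΦ'cont.mono hIcc_sub).intervalIntegrable_of_Icc hca)]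
        have h1 : ∫ x in c..a, Φ' x = Φ a - Φ c := ftc_Icc hΦderiv hΦ'cont hcI ha hca
        rw [hsplit, h1, intervalIntegral.integral_const, smul_eq_mul] at hpos
        -- RHS - F = hpos quantity... derive contradiction
        have h3 := hFeq
        rw [hF] at h3
        nlinarith [hΦcb, hpos, h3]
      subst hac'
      rw [hF]; linarith [hΦcb]
  · -- a ≤ c
    have hIcc_sub : Icc a c ⊆ Icc α₁ α₂ := Icc_subset_Icc ha.1 hcI.2
    have hint : ∫ x in a..c, (b - Φ' x) = F := by
      have h1 : ∫ x in a..c, Φ' x = Φ c - Φ a := ftc_Icc hΦderiv hΦ'cont ha hcI hac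
      have h2 : ∫ x in a..c, (b - Φ' x) = (∫ _ in a..c, b) - ∫ x in a..c, Φ' x := by
        rw [← integral_sub intervalIntegrable_const
          ((hΦ'cont.mono hIcc_sub).intervalIntegrable_of_Icc hac)]
      rw [h2, h1, intervalIntegral.integral_const, smul_eq_mul, hF]
      nlinarith [hΦcb]
    have hcont' : ContinuousOn (fun x => b - Φ' x) (Icc a c) :=
      continuousOn_const.sub (hΦ'cont.mono hIcc_sub)
    have hbnd := int_bound hac hcont'
      (m := 0) (M := b - Φ' a)
      (fun x hx => by
        have := hmono_le (hIcc_sub hx) hcI hx.2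
        rw [hΦ'c] at this; linarith)
      (fun x hx => by
        have := hmono_le ha (hIcc_sub hx) hx.1
        linarith)
    have hFnonneg : 0 ≤ F := by
      rw [← hint]; linarith [hbnd.1]
    have hFle : F ≤ -(Φ' a - b) * (c - a) := by
      rw [← hint]; nlinarith [hbnd.2]
    refine ⟨⟨hFnonneg, hFle⟩, ?_⟩
    constructor
    · intro hF0
      have hac' : a = c := by
        by_contra hne
        have hlt : a < c := lt_of_le_of_ne hac hne
        have hpos : 0 < ∫ x in a..c, (b - Φ' x) := by
          apply intervalIntegral_pos_of_pos_on
            (hcont'.intervalIntegrable_of_Icc hac)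
          · intro x hx
            have hxI : x ∈ Icc α₁ α₂ := hIcc_sub (Ioo_subset_Icc_self hx)
            have := hΦ'mono hxI hcI hx.2
            rw [hΦ'c] at this; linarith
          · exact hlt
        rw [hint, hF0] at hpos; exact lt_irrefl 0 hpos
      subst hac'
      rw [hF0, hΦ'c]
      ring
    · intro hFeq
      have hac' : a = c := by
        by_contra hne
        have hlt : a < c := lt_of_le_of_ne hac hne
        have hpos : 0 < ∫ x in a..c, (Φ' x - Φ' a) := by
          apply intervalIntegral_pos_of_pos_on
          · exact ((hΦ'cont.mono hIcc_sub).sub continuousOn_const).intervalIntegrable_of_Icc hac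
          · intro x hx
            have hxI : x ∈ Icc α₁ α₂ := hIcc_sub (Ioo_subset_Icc_self hx)
            have := hΦ'mono ha hxI hx.1
            linarith
          · exact hlt
        have hsplit : ∫ x in a..c, (Φ' x - Φ' a) = (∫ x in a..c, Φ' x) - ∫ _ in a..c, Φ' a := by
          rw [← integral_sub ((hΦ'cont.mono hIcc_sub).intervalIntegrable_of_Icc hac)
            intervalIntegrable_const]
        have h1 : ∫ x in a..c, Φ' x = Φ c - Φ a := ftc_Icc hΦderiv hΦ'cont ha hcI hac
        rw [hsplit, h1, intervalIntegral.integral_const, smul_eq_mul] at hpos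
        have h3 := hFeq
        rw [hF] at h3
        nlinarith [hΦcb, hpos, h3]
      subst hac'
      rw [hF]; linarith [hΦcb]
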